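/- For any two-input two-output nonsignaling box P and any two distinct indices j ≠ k in {0,1,2,3}, the monoandry relation B_j(P) + B_k(P) ≤ 4 holds, where B_j denotes the absolute value of the j-th CHSH expression. -/

import Mathlib

open Finset Real

noncomputable section

/-- A two-input two-output box: `P a b x y` is the probability of outputs `a, b`
given inputs `x, y`. -/
abbrev Box := Fin 2 → Fin 2 → Fin 2 → Fin 2 → ℝ

/-- The correlator `⟨A_x B_y⟩`. -/
def corr (P : Box) (x y : Fin 2) : ℝ :=
  ∑ a : Fin 2, ∑ b : Fin 2, (-1 : ℝ) ^ ((a : ℕ) + (b : ℕ)) * P a b x y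

/-- Alice's marginal expectation `⟨A_x⟩` (computed with Bob's input `y`). -/
def margA (P : Box) (x y : Fin 2) : ℝ :=
  ∑ a : Fin 2, ∑ b : Fin 2, (-1 : ℝ) ^ ((a : ℕ)) * P a b x y

/-- Bob's marginal expectation `⟨B_y⟩` (computed with Alice's input `x`). -/
def margB (P : Box) (x y : Fin 2) : ℝ :=
  ∑ a : Fin 2, ∑ b : Fin 2, (-1 : ℝ) ^ ((b : ℕ)) * P a b x y

/-- The absolute CHSH expression `B_{2α+β}`. -/
def bell (P : Box) (α β : Fin 2) : ℝ :=
  |corr P 0 0 + (-1 : ℝ) ^ (β : ℕ) * corr P 0 1 + (-1 : ℝ) ^ (α : ℕ) * corr P 1 0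
    + (-1 : ℝ) ^ ((α : ℕ) + (β : ℕ) + 1) * corr P 1 1|

/-- Bell strength `Γ`. -/
def gammaStrength (P : Box) : ℝ :=
  min (|(|bell P 0 0 - bell P 0 1|) - (|bell P 1 0 - bell P 1 1|)|)
    (min (|(|bell P 0 0 - bell P 1 0|) - (|bell P 0 1 - bell P 1 1|)|)
      (|(|bell P 0 0 - bell P 1 1|) - (|bell P 0 1 - bell P 1 0|)|))

/-- Valid box: nonnegative and normalized. -/
def IsBox (P : Box) : Prop :=
  (∀ a b x y, 0 ≤ P a b x y) ∧ ∀ x y, ∑ a : Fin 2, ∑ b : Fin 2, P a b x y = 1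

/-- Nonsignaling condition. -/
def NonSignaling (P : Box) : Prop :=
  (∀ a x y y', ∑ b : Fin 2, P a b x y = ∑ b : Fin 2, P a b x y') ∧
  (∀ b x x' y, ∑ a : Fin 2, P a b x y = ∑ a : Fin 2, P a b x' y)

/-- The noisy PR box `p·P_PR + (1-p)·P_N`. -/
def noisyPR (p : ℝ) : Box := fun a b x y =>
  (1 + (-1 : ℝ) ^ ((a : ℕ) + (b : ℕ) + (x : ℕ) * (y : ℕ)) * p) / 4

/-- The PR box `P_PR^{αβγ}` (addition/multiplication in `Fin 2` is mod 2). -/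
def PRbox (α β γ : Fin 2) : Box := fun a b x y =>
  if a + b = x * y + α * x + β * y + γ then 1 / 2 else 0

/-- The local deterministic box `P_D^{αβγε}`. -/
def detBox (α β γ ε : Fin 2) : Box := fun a b x y =>
  if a = α * x + β ∧ b = γ * y + ε then 1 else 0


lemma abs_add_abs_le {x y c : ℝ} (h1 : x + y ≤ c) (h2 : x - y ≤ c)
    (h3 : -x + y ≤ c) (h4 : -x - y ≤ c) : |x| + |y| ≤ c := by
  cases abs_cases x <;> cases abs_cases y <;> linarith

lemma corr_bound (P : Box) (hbox : IsBox P) (x y : Fin 2) :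
    -1 ≤ corr P x y ∧ corr P x y ≤ 1 := by
  have h := hbox.2 x y
  have h00 := hbox.1 0 0 x y
  have h01 := hbox.1 0 1 x y
  have h10 := hbox.1 1 0 x y
  have h11 := hbox.1 1 1 x y
  simp [Fin.sum_univ_two] at h
  simp [corr, Fin.sum_univ_two]
  constructor <;> nlinarith

/-- monoandry, `B_j(P) + B_k(P) ≤ 4` for distinct CHSH expressions of
any two-input two-output nonsignaling box. -/
theorem monoandry (P : Box) (hbox : IsBox P) (hns : NonSignaling P)
    (α β α' β' : Fin 2) (hne : (α, β) ≠ (α', β')) :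
    bell P α β + bell P α' β' ≤ 4 := by
  obtain ⟨l00, u00⟩ := corr_bound P hbox 0 0
  obtain ⟨l01, u01⟩ := corr_bound P hbox 0 1
  obtain ⟨l10, u10⟩ := corr_bound P hbox 1 0
  obtain ⟨l11, u11⟩ := corr_bound P hbox 1 1
  fin_cases α <;> fin_cases β <;> fin_cases α' <;> fin_cases β' <;>
    simp only [bell] <;> (try exact absurd rfl hne) <;> norm_num at hne ⊢ <;>
    (apply abs_add_abs_le <;> linarith)
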